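/- The RandChore mechanism is group-strategyproof in expectation: there do not exist a set S ⊆ N of agents with true valuations v_S and a reported profile (v̂_S, v̂_{-S}) such that for every i ∈ S, agent i's expected true utility under RandChore(v̂_S, v̂_{-S}) is at least his expected true utility under RandChore(v_S, v̂_{-S}), with strict inequality for at least one i ∈ S. -/
import Mathlib


open Finset

attribute [local instance] Classical.propDecidable

noncomputable section

/-- The bundle of agent `i` under deterministic allocation `A`. -/
def bundle {m n : ℕ} (A : Fin m → Fin n) (i : Fin n) : Finset (Fin m) :=
  Finset.univ.filter fun j => A j = i

/-- Additive value of a bundle. -/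
def sval {m : ℕ} (f : Fin m → ℝ) (S : Finset (Fin m)) : ℝ := ∑ j ∈ S, f j

/-- The set `Q` of (indices of) items on which some agent reports value zero. -/
def chQ {n m : ℕ} (r : Fin n → Fin m → ℝ) : Finset (Fin m) :=
  Finset.univ.filter fun q => ∃ i, r i q = 0

/-- The set of agents reporting value zero on item `q`. -/
def chZ {n m : ℕ} (r : Fin n → Fin m → ℝ) (q : Fin m) : Finset (Fin n) :=
  Finset.univ.filter fun i => r i q = 0

/-- The position of item `q ∈ Q̄` in the list of the items of `Q̄` sorted in nonincreasing
order of inherent value `w`, ties broken by smallest index. -/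
def chRank {n m : ℕ} (w : Fin m → ℝ) (r : Fin n → Fin m → ℝ) (q : Fin m) : ℕ :=
  (((chQ r)ᶜ).filter fun q' => w q' > w q ∨ (w q' = w q ∧ q' < q)).card

/-- The probability that mechanism `RandChore`, on reported profile `r` (inherent values `w`),
outputs the deterministic allocation `A`: each item of `Q` goes independently and uniformly to
an agent reporting zero on it, and the items of `Q̄` are allocated round-robin (in nonincreasing
inherent value, ties by index) according to a uniformly random permutation of the agents. -/
def randChoreProb {n m : ℕ} (hn : 0 < n) (w : Fin m → ℝ) (r : Fin n → Fin m → ℝ)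
    (A : Fin m → Fin n) : ℝ :=
  ((∑ σ : Equiv.Perm (Fin n),
      if ∀ q ∈ (chQ r)ᶜ, A q = σ ⟨chRank w r q % n, Nat.mod_lt _ hn⟩ then (1 : ℝ) else 0)
    / (Fintype.card (Equiv.Perm (Fin n)) : ℝ))
  * ∏ q ∈ chQ r, (if r (A q) q = 0 then (1 : ℝ) / ((chZ r q).card : ℝ) else 0)

/-- The expected utility, under `RandChore` on reported profile `r`, of agent `i` whose true
additive valuation is `vi`. -/
def randChoreExp {n m : ℕ} (hn : 0 < n) (w : Fin m → ℝ) (r : Fin n → Fin m → ℝ)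
    (vi : Fin m → ℝ) (i : Fin n) : ℝ :=
  ∑ A : Fin m → Fin n, randChoreProb hn w r A * sval vi (bundle A i)

lemma prod_ite_forall {α : Type*} (s : Finset α) (p : α → Prop) :
    (∏ x ∈ s, if p x then (1:ℝ) else 0) = if ∀ x ∈ s, p x then 1 else 0 := by
  split_ifs with h
  · exact Finset.prod_eq_one fun x hx => if_pos (h x hx)
  · push_neg at h; obtain ⟨x, hx, hpx⟩ := h
    exact Finset.prod_eq_zero hx (if_neg hpx)


lemma chZ_card_pos {n m : ℕ} (r : Fin n → Fin m → ℝ) (q : Fin m) (h : q ∈ chQ r) :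
    0 < (chZ r q).card := by
  simp only [chQ, mem_filter, mem_univ, true_and] at h
  obtain ⟨i, hi⟩ := h
  exact Finset.card_pos.mpr ⟨i, by simp [chZ, hi]⟩


lemma sum_h_eq_one {n m : ℕ} (r : Fin n → Fin m → ℝ) (q : Fin m) (h : q ∈ chQ r) :
    (∑ j : Fin n, if r j q = 0 then 1 / ((chZ r q).card : ℝ) else 0) = 1 := by
  rw [Finset.sum_ite, Finset.sum_const, Finset.sum_const_zero, add_zero, nsmul_eq_mul]
  have : (univ.filter fun j => r j q = 0) = chZ r q := rfl
  rw [this]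
  have hz : ((chZ r q).card : ℝ) ≠ 0 := by
    have := chZ_card_pos r q h
    positivity
  field_simp


lemma perm_count (n : ℕ) (hn : 0 < n) (k i : Fin n) :
    (∑ σ : Equiv.Perm (Fin n), if σ k = i then (1:ℝ) else 0)
      = (Fintype.card (Equiv.Perm (Fin n)) : ℝ) / n := by
  set c : Fin n → ℝ := fun j => ∑ σ : Equiv.Perm (Fin n), if σ k = j then (1:ℝ) else 0 with hc
  have hcj : ∀ j, c j = c i := by
    intro j
    have key := Equiv.sum_comp (Equiv.mulLeft (Equiv.swap i j))
      (fun σ : Equiv.Perm (Fin n) => if σ k = j then (1:ℝ) else 0)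
    show (∑ σ : Equiv.Perm (Fin n), if σ k = j then (1:ℝ) else 0)
      = ∑ σ : Equiv.Perm (Fin n), if σ k = i then (1:ℝ) else 0
    rw [← key]
    apply Finset.sum_congr rfl
    intro σ _
    simp only [Equiv.coe_mulLeft, Equiv.Perm.mul_apply]
    congr 1
    simp only [eq_iff_iff]
    constructor
    · intro hsk
      have := congrArg (Equiv.swap i j) hsk
      rwa [Equiv.swap_apply_self, Equiv.swap_apply_right] at this
    · intro hsk; rw [hsk, Equiv.swap_apply_left]
  have hsum : ∑ j : Fin n, c j = (Fintype.card (Equiv.Perm (Fin n)) : ℝ) := by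
    rw [hc, Finset.sum_comm]
    simp only [Finset.sum_ite_eq, Finset.mem_univ, if_true]
    rw [Finset.sum_const, nsmul_eq_mul, mul_one, Finset.card_univ]
  rw [Finset.sum_congr rfl (fun j _ => hcj j)] at hsum
  rw [Finset.sum_const, nsmul_eq_mul, Finset.card_univ, Fintype.card_fin] at hsum
  have hn' : (n:ℝ) ≠ 0 := by positivity
  show c i = (Fintype.card (Equiv.Perm (Fin n)) : ℝ) / n
  rw [eq_div_iff hn']
  linarith [hsum]


/-- Product-form kernel used to factorize `randChoreProb`. -/
def Fk {n m : ℕ} (hn : 0 < n) (w : Fin m → ℝ) (r : Fin n → Fin m → ℝ)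
    (σ : Equiv.Perm (Fin n)) (q' : Fin m) (j : Fin n) : ℝ :=
  if q' ∈ chQ r then (if r j q' = 0 then 1 / ((chZ r q').card : ℝ) else 0)
  else (if j = σ ⟨chRank w r q' % n, Nat.mod_lt _ hn⟩ then 1 else 0)


lemma prob_eq_sum_prod {n m : ℕ} (hn : 0 < n) (w : Fin m → ℝ) (r : Fin n → Fin m → ℝ)
    (A : Fin m → Fin n) :
    randChoreProb hn w r A =
      (∑ σ : Equiv.Perm (Fin n), ∏ q' : Fin m, Fk hn w r σ q' (A q'))
        / (Fintype.card (Equiv.Perm (Fin n)) : ℝ) := by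
  unfold randChoreProb
  rw [div_mul_eq_mul_div, Finset.sum_mul]
  congr 1
  apply Finset.sum_congr rfl
  intro σ _
  rw [← Finset.prod_mul_prod_compl (chQ r) (fun q' => Fk hn w r σ q' (A q'))]
  have h1 : (∏ q' ∈ chQ r, Fk hn w r σ q' (A q'))
      = ∏ q' ∈ chQ r, (if r (A q') q' = 0 then (1:ℝ) / ((chZ r q').card : ℝ) else 0) := by
    apply Finset.prod_congr rfl
    intro q' hq'
    simp [Fk, hq']
  have h2 : (∏ q' ∈ (chQ r)ᶜ, Fk hn w r σ q' (A q'))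
      = if ∀ q ∈ (chQ r)ᶜ, A q = σ ⟨chRank w r q % n, Nat.mod_lt _ hn⟩ then (1:ℝ) else 0 := by
    by_cases hA : ∀ q' ∈ (chQ r)ᶜ, A q' = σ ⟨chRank w r q' % n, Nat.mod_lt _ hn⟩
    · rw [if_pos hA]
      refine Finset.prod_eq_one fun x hx => ?_
      simp [Fk, Finset.mem_compl.mp hx, hA x hx]
    · rw [if_neg hA]
      push_neg at hA
      obtain ⟨x, hx, hpx⟩ := hA
      refine Finset.prod_eq_zero hx ?_
      simp [Fk, Finset.mem_compl.mp hx, hpx]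
  rw [h1, h2, mul_comm]


/-- The marginal probability that item `q` is assigned to agent `i`. -/
def marg {n m : ℕ} (r : Fin n → Fin m → ℝ) (q : Fin m) (i : Fin n) : ℝ :=
  if q ∈ chQ r then (if r i q = 0 then 1 / ((chZ r q).card : ℝ) else 0) else 1 / (n : ℝ)


lemma marginal {n m : ℕ} (hn : 0 < n) (w : Fin m → ℝ) (r : Fin n → Fin m → ℝ)
    (q : Fin m) (i : Fin n) :
    (∑ A : Fin m → Fin n, randChoreProb hn w r A * (if A q = i then (1:ℝ) else 0))
      = marg r q i := by
  unfold marg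
  have hN : (0:ℝ) < (Fintype.card (Equiv.Perm (Fin n)) : ℝ) := by
    exact_mod_cast Fintype.card_pos
  -- step 1: rewrite each prob and push things around
  have step1 : (∑ A : Fin m → Fin n, randChoreProb hn w r A * (if A q = i then (1:ℝ) else 0))
      = (∑ σ : Equiv.Perm (Fin n), ∑ A : Fin m → Fin n,
          ∏ q' : Fin m, (Fk hn w r σ q' (A q') *
            (if q' = q then (if A q' = i then (1:ℝ) else 0) else 1)))
        / (Fintype.card (Equiv.Perm (Fin n)) : ℝ) := by
    have hA : ∀ A : Fin m → Fin n, randChoreProb hn w r A * (if A q = i then (1:ℝ) else 0)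
        = (∑ σ : Equiv.Perm (Fin n), ∏ q' : Fin m, (Fk hn w r σ q' (A q') *
            (if q' = q then (if A q' = i then (1:ℝ) else 0) else 1)))
          / (Fintype.card (Equiv.Perm (Fin n)) : ℝ) := by
      intro A
      rw [prob_eq_sum_prod, div_mul_eq_mul_div, Finset.sum_mul]
      congr 1
      apply Finset.sum_congr rfl
      intro σ _
      rw [Finset.prod_mul_distrib]
      congr 1
      rw [Finset.prod_ite_eq' Finset.univ q
        (fun q' => if A q' = i then (1:ℝ) else 0)]
      simp
    simp_rw [hA]
    rw [← Finset.sum_div, Finset.sum_comm]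
  rw [step1]
  -- step 2: factorize the inner sum over A
  have step2 : ∀ σ : Equiv.Perm (Fin n),
      (∑ A : Fin m → Fin n, ∏ q' : Fin m, (Fk hn w r σ q' (A q') *
          (if q' = q then (if A q' = i then (1:ℝ) else 0) else 1)))
      = ∏ q' : Fin m, ∑ j : Fin n, (Fk hn w r σ q' j *
          (if q' = q then (if j = i then (1:ℝ) else 0) else 1)) := by
    intro σ
    rw [Finset.prod_univ_sum (fun _ => (Finset.univ : Finset (Fin n)))]
    rw [Fintype.piFinset_univ]
  -- step 3: compute the product over q'
  have step3 : ∀ σ : Equiv.Perm (Fin n),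
      (∏ q' : Fin m, ∑ j : Fin n, (Fk hn w r σ q' j *
          (if q' = q then (if j = i then (1:ℝ) else 0) else 1)))
      = Fk hn w r σ q i := by
    intro σ
    have hother : ∀ q' ∈ (Finset.univ : Finset (Fin m)), q' ≠ q →
        (∑ j : Fin n, (Fk hn w r σ q' j *
          (if q' = q then (if j = i then (1:ℝ) else 0) else 1))) = 1 := by
      intro q' _ hq'q
      simp_rw [if_neg hq'q, mul_one]
      by_cases hq' : q' ∈ chQ r
      · simp only [Fk, if_pos hq']
        exact sum_h_eq_one r q' hq'
      · simp only [Fk, if_neg hq']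
        rw [Finset.sum_ite_eq' Finset.univ _ (fun _ => (1:ℝ))]
        simp
    rw [Finset.prod_eq_single_of_mem q (Finset.mem_univ q) hother]
    have hterm : ∀ j : Fin n, Fk hn w r σ q j *
        (if q = q then (if j = i then (1:ℝ) else 0) else 1)
        = if j = i then Fk hn w r σ q j else 0 := by
      intro j
      rw [if_pos rfl]
      split_ifs <;> simp
    rw [Finset.sum_congr rfl (fun j _ => hterm j),
      Finset.sum_ite_eq' Finset.univ i (fun j => Fk hn w r σ q j)]
    simp
  simp_rw [step2, step3]
  -- step 4: sum over σ
  by_cases hq : q ∈ chQ r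
  · rw [if_pos hq]
    simp only [Fk, if_pos hq]
    rw [Finset.sum_const, nsmul_eq_mul, Finset.card_univ]
    rw [mul_comm, mul_div_assoc, div_self (ne_of_gt hN), mul_one]
  · rw [if_neg hq]
    simp only [Fk, if_neg hq]
    have : ∀ σ : Equiv.Perm (Fin n),
        (if i = σ ⟨chRank w r q % n, Nat.mod_lt _ hn⟩ then (1:ℝ) else 0)
        = if σ ⟨chRank w r q % n, Nat.mod_lt _ hn⟩ = i then (1:ℝ) else 0 := by
      intro σ; simp [eq_comm]
    simp_rw [this]
    rw [perm_count n hn _ i]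
    rw [div_div, div_eq_div_iff (by positivity) (by positivity)]
    ring


lemma randChoreExp_eq {n m : ℕ} (hn : 0 < n) (w : Fin m → ℝ) (r : Fin n → Fin m → ℝ)
    (vi : Fin m → ℝ) (i : Fin n) :
    randChoreExp hn w r vi i = ∑ q : Fin m, vi q * marg r q i := by
  unfold randChoreExp sval bundle
  have h1 : ∀ A : Fin m → Fin n,
      randChoreProb hn w r A * (∑ j ∈ Finset.univ.filter fun j => A j = i, vi j)
      = ∑ q : Fin m, vi q * (randChoreProb hn w r A * (if A q = i then (1:ℝ) else 0)) := by
    intro A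
    rw [Finset.sum_filter, Finset.mul_sum]
    apply Finset.sum_congr rfl
    intro j _
    split_ifs <;> ring
  rw [Finset.sum_congr rfl fun A _ => h1 A, Finset.sum_comm]
  apply Finset.sum_congr rfl
  intro q _
  rw [← Finset.mul_sum, marginal hn w r q i]


lemma marg_nonneg {n m : ℕ} (r : Fin n → Fin m → ℝ) (q : Fin m) (i : Fin n) :
    0 ≤ marg r q i := by
  unfold marg
  split_ifs <;> positivity

/-- Per-item inequality: the coalition's total expected value from item `q` under the
misreport `r` is at most that under the truthful profile `t`. -/


lemma peritem {n m : ℕ} (hn : 0 < n) (w : Fin m → ℝ) (hw : ∀ j, w j < 0)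
    (v r : Fin n → Fin m → ℝ) (hv : ∀ i j, v i j = 0 ∨ v i j = w j)
    (S : Finset (Fin n)) (q : Fin m) :
    (∑ i ∈ S, v i q * marg r q i) ≤
      ∑ i ∈ S, v i q * marg (fun i' => if i' ∈ S then v i' else r i') q i := by
  set t : Fin n → Fin m → ℝ := fun i' => if i' ∈ S then v i' else r i' with ht
  have hviq : ∀ i, v i q ≤ 0 := fun i => (hv i q).elim le_of_eq (fun h => h ▸ (hw q).le)
  by_cases hQt : q ∈ chQ t
  · -- RHS is 0, LHS ≤ 0
    have hRHS : (∑ i ∈ S, v i q * marg t q i) = 0 := by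
      apply Finset.sum_eq_zero
      intro i hi
      rcases hv i q with h0 | hwq
      · rw [h0, zero_mul]
      · have htiq : t i q = w q := by rw [ht]; simp [hi, hwq]
        have : marg t q i = 0 := by
          unfold marg
          rw [if_pos hQt, if_neg (by rw [htiq]; exact (hw q).ne)]
        rw [this, mul_zero]
    rw [hRHS]
    apply Finset.sum_nonpos
    intro i _
    exact mul_nonpos_of_nonpos_of_nonneg (hviq i) (marg_nonneg r q i)
  · -- q ∉ chQ t : everyone truly dislikes q (members of S), outsiders report nonzero
    have hall : ∀ j, t j q ≠ 0 := by
      intro j hj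
      exact hQt (by simp [chQ]; exact ⟨j, hj⟩)
    have hmargt : ∀ i, marg t q i = 1 / (n:ℝ) := by
      intro i; unfold marg; rw [if_neg hQt]
    have hvS : ∀ i ∈ S, v i q = w q := by
      intro i hi
      rcases hv i q with h0 | hwq
      · exact absurd (by rw [ht]; simpa [hi] using h0) (hall i)
      · exact hwq
    have hRHS : (∑ i ∈ S, v i q * marg t q i) = S.card * w q / (n:ℝ) := by
      rw [Finset.sum_congr rfl fun i hi => by rw [hmargt i, hvS i hi]]
      rw [Finset.sum_const, nsmul_eq_mul]
      ring
    rw [hRHS]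
    by_cases hQr : q ∈ chQ r
    · -- LHS = w q
      have hZsub : chZ r q ⊆ S := by
        intro j hj
        simp only [chZ, mem_filter, mem_univ, true_and] at hj
        by_contra hjS
        exact hall j (by rw [ht]; simpa [hjS] using hj)
      have hz := chZ_card_pos r q hQr
      have hzR : (0:ℝ) < ((chZ r q).card : ℝ) := by exact_mod_cast hz
      have hLHS : (∑ i ∈ S, v i q * marg r q i) = w q := by
        have hterm : ∀ i ∈ S, v i q * marg r q i
            = if i ∈ chZ r q then w q / ((chZ r q).card : ℝ) else 0 := by
          intro i hi
          unfold marg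
          rw [if_pos hQr]
          by_cases hri : r i q = 0
          · rw [if_pos hri, if_pos (by simp [chZ, hri]), hvS i hi]
            ring
          · rw [if_neg hri, if_neg (by simp [chZ, hri]), mul_zero]
        rw [Finset.sum_congr rfl hterm, Finset.sum_ite_mem,
          Finset.inter_eq_right.mpr hZsub, Finset.sum_const, nsmul_eq_mul]
        field_simp
      rw [hLHS]
      -- w q ≤ |S| * w q / n  since |S| ≤ n and w q < 0
      have hcard : (S.card : ℝ) ≤ n := by
        exact_mod_cast (Finset.card_le_univ S).trans_eq (by simp)
      have hnR : (0:ℝ) < n := by exact_mod_cast hn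
      rw [le_div_iff₀ hnR]
      nlinarith [hw q]
    · -- LHS = RHS
      have hmargr : ∀ i, marg r q i = 1 / (n:ℝ) := by
        intro i; unfold marg; rw [if_neg hQr]
      rw [Finset.sum_congr rfl fun i hi => by rw [hmargr i, hvS i hi],
        Finset.sum_const, nsmul_eq_mul]
      rw [mul_one_div, mul_div_assoc]


/-- `RandChore` is group-strategyproof in expectation: no coalition `S` has a
joint misreport (the others' reports being fixed) making every member at least as well off
in expectation as under truthful reporting by `S`, with at least one member strictly better off. -/
theorem randChore_GSPIE (n m : ℕ) (hn : 0 < n)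
    (w : Fin m → ℝ) (hw : ∀ j, w j < 0)
    (v : Fin n → Fin m → ℝ) (hv : ∀ i j, v i j = 0 ∨ v i j = w j) :
    ¬ ∃ (S : Finset (Fin n)) (r : Fin n → Fin m → ℝ),
        (∀ i j, r i j = 0 ∨ r i j = w j) ∧
        (∀ i ∈ S, randChoreExp hn w r (v i) i ≥
          randChoreExp hn w (fun i' => if i' ∈ S then v i' else r i') (v i) i) ∧
        (∃ i ∈ S, randChoreExp hn w r (v i) i >
          randChoreExp hn w (fun i' => if i' ∈ S then v i' else r i') (v i) i) := by
  rintro ⟨S, r, hr, hge, i0, hi0, hlt⟩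
  set t : Fin n → Fin m → ℝ := fun i' => if i' ∈ S then v i' else r i' with ht
  have hsum_le : (∑ i ∈ S, randChoreExp hn w r (v i) i)
      ≤ ∑ i ∈ S, randChoreExp hn w t (v i) i := by
    have e1 : (∑ i ∈ S, randChoreExp hn w r (v i) i)
        = ∑ q : Fin m, ∑ i ∈ S, v i q * marg r q i := by
      rw [Finset.sum_congr rfl fun i _ => randChoreExp_eq hn w r (v i) i, Finset.sum_comm]
    have e2 : (∑ i ∈ S, randChoreExp hn w t (v i) i)
        = ∑ q : Fin m, ∑ i ∈ S, v i q * marg t q i := by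
      rw [Finset.sum_congr rfl fun i _ => randChoreExp_eq hn w t (v i) i, Finset.sum_comm]
    rw [e1, e2]
    exact Finset.sum_le_sum fun q _ => peritem hn w hw v r hv S q
  have hsum_lt : (∑ i ∈ S, randChoreExp hn w t (v i) i)
      < ∑ i ∈ S, randChoreExp hn w r (v i) i :=
    Finset.sum_lt_sum (fun i hi => hge i hi) ⟨i0, hi0, hlt⟩
  linarith
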